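/- For p ≥ 2 and vectors x, y in ℝ^d, the inner product of (|x|^{p-2} x − |y|^{p-2} y) with (x − y) is at least 2^{2−p} |x − y|^p. -/

import Mathlib

private lemma key_convex (a b q : ℝ) (ha : 0 ≤ a) (hb : 0 ≤ b) (hq : 1 ≤ q) :
    (a + b) ^ q ≤ 2 ^ (q - 1) * (a ^ q + b ^ q) := by
  have h := NNReal.rpow_add_le_mul_rpow_add_rpow ⟨a, ha⟩ ⟨b, hb⟩ hq
  have h2 := (NNReal.coe_le_coe).2 h
  push_cast [NNReal.coe_rpow] at h2
  exact h2

/-- p-Laplacian monotonicity inequality with explicit constant, for `p ≥ 2`. -/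
theorem plap_monotone_big_p (d : ℕ) (p : ℝ) (hp : 2 ≤ p)
    (x y : EuclideanSpace ℝ (Fin d)) :
    (2:ℝ) ^ (2 - p) * ‖x - y‖ ^ p ≤
      (inner ℝ ((‖x‖ ^ (p - 2)) • x - (‖y‖ ^ (p - 2)) • y) (x - y) : ℝ) := by
  have hp0 : (0:ℝ) < p := by linarith
  by_cases hxy : x = y
  · subst hxy
    simp [Real.zero_rpow (ne_of_gt hp0)]
  set k := (2:ℝ) ^ (2 - p) with hk_def
  have hk : 0 < k := Real.rpow_pos_of_pos two_pos _
  have hk2 : k * 2 ^ (p - 2) = 1 := by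
    rw [hk_def, ← Real.rpow_add two_pos]
    norm_num
  set a := ‖x‖ with ha_def
  set b := ‖y‖ with hb_def
  set t := ‖x - y‖ with ht_def
  have ha : 0 ≤ a := norm_nonneg _
  have hb : 0 ≤ b := norm_nonneg _
  have ht : 0 < t := by
    rw [ht_def]
    exact norm_sub_pos_iff.2 hxy
  set A := a ^ (p - 2) with hA_def
  set B := b ^ (p - 2) with hB_def
  set c := (inner ℝ x y : ℝ) with hc_def
  have hexp : (inner ℝ ((a ^ (p - 2)) • x - (b ^ (p - 2)) • y) (x - y) : ℝ)
      = A * a ^ 2 + B * b ^ 2 - (A + B) * c := by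
    have hcyx : (inner ℝ y x : ℝ) = c := by rw [hc_def]; exact real_inner_comm x y
    simp only [inner_sub_left, inner_sub_right, real_inner_smul_left,
      real_inner_self_eq_norm_sq, ← ha_def, ← hb_def, ← hA_def, ← hB_def, ← hc_def, hcyx]
    ring
  rw [hexp]
  have htsq : t ^ 2 = a ^ 2 - 2 * c + b ^ 2 := by
    rw [ht_def, ha_def, hb_def, hc_def]
    exact norm_sub_sq_real x y
  have htab : t ≤ a + b := by
    rw [ht_def, ha_def, hb_def]; exact norm_sub_le x y
  have hab : 0 < a + b := lt_of_lt_of_le ht htab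
  set T := t ^ (p - 2) with hT_def
  set E := (a + b) ^ (p - 2) with hE_def
  have hT : 0 ≤ T := Real.rpow_nonneg ht.le _
  have hE : 0 ≤ E := Real.rpow_nonneg hab.le _
  have hA : 0 ≤ A := Real.rpow_nonneg ha _
  have hB : 0 ≤ B := Real.rpow_nonneg hb _
  have hTE : T ≤ E := Real.rpow_le_rpow ht.le htab (by linarith)
  have htp : t ^ p = T * t ^ 2 := by
    rw [hT_def, ← Real.rpow_natCast t 2, ← Real.rpow_add ht]
    norm_num
  have hmono : 0 ≤ (A - B) * (a - b) := by
    rcases le_total a b with h | h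
    · have hAB : A ≤ B := Real.rpow_le_rpow ha h (by linarith)
      have h5 : 0 ≤ (B - A) * (b - a) := mul_nonneg (by linarith) (by linarith)
      nlinarith [h5]
    · have hAB : B ≤ A := Real.rpow_le_rpow hb h (by linarith)
      exact mul_nonneg (by linarith) (by linarith)
  -- rpow splitting identities
  have hap : a ^ (p - 1) = A * a := by
    have h := Real.rpow_add' (y := p - 2) (z := 1) ha (by intro h; linarith)
    rw [show p - 2 + 1 = p - 1 by ring, Real.rpow_one] at h
    rw [h, hA_def]
  have hbp : b ^ (p - 1) = B * b := by
    have h := Real.rpow_add' (y := p - 2) (z := 1) hb (by intro h; linarith)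
    rw [show p - 2 + 1 = p - 1 by ring, Real.rpow_one] at h
    rw [h, hB_def]
  have habp : (a + b) ^ p = E * (a + b) ^ 2 := by
    have h := Real.rpow_add' (y := p - 2) (z := 2) hab.le (by intro h; linarith)
    rw [show p - 2 + 2 = p by ring] at h
    rw [h, hE_def, show ((2:ℝ)) = ((2:ℕ):ℝ) by norm_num, Real.rpow_natCast]
  -- key convexity inequality
  have hkey : k * (E * (a + b) ^ 2) * t ^ 2 ≤ (a + b) * (A * a + B * b) * t ^ 2 := by
    have h1 : (a + b) ^ (p - 1) ≤ 2 ^ (p - 2) * (a ^ (p - 1) + b ^ (p - 1)) := by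
      have h := key_convex a b (p - 1) ha hb (by linarith)
      rwa [show p - 1 - 1 = p - 2 by ring] at h
    rw [hap, hbp] at h1
    have h2 : (a + b) ^ p ≤ 2 ^ (p - 2) * (a + b) * (A * a + B * b) := by
      have hsplit : (a + b) ^ p = (a + b) ^ (p - 1) * (a + b) := by
        have h := Real.rpow_add' (y := p - 1) (z := 1) hab.le (by intro h; linarith)
        rw [show p - 1 + 1 = p by ring, Real.rpow_one] at h
        exact h
      calc (a + b) ^ p = (a + b) ^ (p - 1) * (a + b) := hsplit
        _ ≤ 2 ^ (p - 2) * (A * a + B * b) * (a + b) :=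
            mul_le_mul_of_nonneg_right h1 hab.le
        _ = 2 ^ (p - 2) * (a + b) * (A * a + B * b) := by ring
    have h3 : k * (E * (a + b) ^ 2) ≤ (a + b) * (A * a + B * b) := by
      rw [← habp]
      calc k * (a + b) ^ p ≤ k * (2 ^ (p - 2) * (a + b) * (A * a + B * b)) :=
            mul_le_mul_of_nonneg_left h2 hk.le
        _ = (k * 2 ^ (p - 2)) * ((a + b) * (A * a + B * b)) := by ring
        _ = (a + b) * (A * a + B * b) := by rw [hk2]; ring
    exact mul_le_mul_of_nonneg_right h3 (sq_nonneg t)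
  have hF2 : 0 ≤ (A - B) * (a - b) * ((a + b) * ((a + b) ^ 2 - t ^ 2)) := by
    have h4 : 0 ≤ (a + b) ^ 2 - t ^ 2 := by nlinarith
    exact mul_nonneg hmono (mul_nonneg hab.le h4)
  have step2 : k * (E * t ^ 2) * (a + b) ^ 2 ≤
      ((A + B) / 2 * t ^ 2 + (A - B) * (a ^ 2 - b ^ 2) / 2) * (a + b) ^ 2 := by
    calc k * (E * t ^ 2) * (a + b) ^ 2 = k * (E * (a + b) ^ 2) * t ^ 2 := by ring
      _ ≤ (a + b) * (A * a + B * b) * t ^ 2 := hkey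
      _ = ((A + B) / 2 * t ^ 2 + (A - B) * (a ^ 2 - b ^ 2) / 2) * (a + b) ^ 2
          - ((A - B) * (a - b) * ((a + b) * ((a + b) ^ 2 - t ^ 2))) / 2 := by ring
      _ ≤ ((A + B) / 2 * t ^ 2 + (A - B) * (a ^ 2 - b ^ 2) / 2) * (a + b) ^ 2 := by
          linarith [hF2]
  have step3 : k * (E * t ^ 2) ≤ (A + B) / 2 * t ^ 2 + (A - B) * (a ^ 2 - b ^ 2) / 2 :=
    le_of_mul_le_mul_right step2 (pow_pos hab 2)
  have step1 : k * (T * t ^ 2) ≤ k * (E * t ^ 2) :=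
    mul_le_mul_of_nonneg_left (mul_le_mul_of_nonneg_right hTE (sq_nonneg t)) hk.le
  have hgoal : A * a ^ 2 + B * b ^ 2 - (A + B) * c
      = (A + B) / 2 * t ^ 2 + (A - B) * (a ^ 2 - b ^ 2) / 2 := by
    have hc : c = (a ^ 2 + b ^ 2 - t ^ 2) / 2 := by linarith
    rw [hc]; ring
  rw [htp, hgoal]
  calc k * (T * t ^ 2) ≤ k * (E * t ^ 2) := step1
    _ ≤ _ := step3
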